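/- Let R be a commutative ring equipped with a pre-lambda structure λ. Then the map Exp : t·R[[t]] → 1+t·R[[t]] defined by Exp(Σ_{k≥1} b_k t^k) := ∏_{k≥1} λ(b_k)(t^k) is a group isomorphism from the additive group (t·R[[t]], +) of power series with zero constant term onto the multiplicative group (1+t·R[[t]], ·) of power series with constant coefficient 1. -/

import Mathlib

open PowerSeries

/-- A pre-lambda structure on a commutative ring `R`: a map `λ` assigning to each `m ∈ R`
a formal power series with constant coefficient `1` and coefficient of `t` equal to `m`,
such that `λ(m+n) = λ(m)·λ(n)`. -/
structure PreLambda (R : Type*) [CommRing R] where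
  toFun : R → PowerSeries R
  constantCoeff_toFun : ∀ m, PowerSeries.constantCoeff (toFun m) = 1
  coeff_one_toFun : ∀ m, PowerSeries.coeff 1 (toFun m) = m
  toFun_add : ∀ m n, toFun (m + n) = toFun m * toFun n

variable {R : Type*} [CommRing R]

/-- Substitution of `t^k` for `t` in a formal power series (intended for `k ≥ 1`). -/
noncomputable def substPow (k : ℕ) (f : PowerSeries R) : PowerSeries R :=
  PowerSeries.mk fun n => if k ∣ n then PowerSeries.coeff (n / k) f else 0

/-- The infinite product `∏_{k≥1} λ(b_k)(t^k)` (here `b k` is the exponent of the factor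
with index `k+1`): its coefficient of `t^n` is that of the finite partial product of the
factors of index `≤ n`, which is legitimate since the factor of index `k` is `≡ 1 mod t^k`. -/
noncomputable def eulerProd (Λ : PreLambda R) (b : ℕ → R) : PowerSeries R :=
  PowerSeries.mk fun n =>
    PowerSeries.coeff n (∏ k ∈ Finset.range n, substPow (k + 1) (Λ.toFun (b k)))

lemma coeff_substPow (k n : ℕ) (f : PowerSeries R) :
    coeff n (substPow k f) = if k ∣ n then coeff (n / k) f else 0 := by
  simp [substPow]

lemma substPow_mul (k : ℕ) (hk : 0 < k) (f g : PowerSeries R) :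
    substPow k (f * g) = substPow k f * substPow k g := by
  ext n
  conv_rhs => rw [PowerSeries.coeff_mul]
  simp only [coeff_substPow]
  by_cases h : k ∣ n
  · obtain ⟨m, rfl⟩ := h
    rw [if_pos ⟨m, rfl⟩, Nat.mul_div_cancel_left m hk, PowerSeries.coeff_mul]
    have hsub : (Finset.HasAntidiagonal.antidiagonal m).image (fun q : ℕ × ℕ => (k * q.1, k * q.2)) ⊆
        Finset.HasAntidiagonal.antidiagonal (k * m) := by
      intro p hp
      obtain ⟨q, hq, rfl⟩ := Finset.mem_image.mp hp
      rw [Finset.HasAntidiagonal.mem_antidiagonal] at hq ⊢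
      rw [← Nat.mul_add, hq]
    rw [← Finset.sum_subset hsub, Finset.sum_image]
    · refine Finset.sum_congr rfl fun q hq => ?_
      rw [if_pos (dvd_mul_right k q.1), if_pos (dvd_mul_right k q.2),
        Nat.mul_div_cancel_left _ hk, Nat.mul_div_cancel_left _ hk]
    · intro a _ b _ hab
      have h1 := congrArg Prod.fst hab
      have h2 := congrArg Prod.snd hab
      simp only at h1 h2
      exact Prod.ext (Nat.eq_of_mul_eq_mul_left hk h1) (Nat.eq_of_mul_eq_mul_left hk h2)
    · intro p hp hnot
      by_cases h1 : k ∣ p.1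
      · by_cases h2 : k ∣ p.2
        · exfalso
          apply hnot
          obtain ⟨a, ha⟩ := h1
          obtain ⟨b, hb⟩ := h2
          refine Finset.mem_image.mpr ⟨(a, b), ?_, ?_⟩
          · rw [Finset.HasAntidiagonal.mem_antidiagonal]
            have hm := Finset.HasAntidiagonal.mem_antidiagonal.mp hp
            rw [ha, hb, ← Nat.mul_add] at hm
            exact Nat.eq_of_mul_eq_mul_left hk hm
          · exact Prod.ext ha.symm hb.symm
        · rw [if_neg h2, mul_zero]
      · rw [if_neg h1, zero_mul]
  · rw [if_neg h]
    refine (Finset.sum_eq_zero fun p hp => ?_).symm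
    by_cases h1 : k ∣ p.1
    · by_cases h2 : k ∣ p.2
      · exact absurd (Finset.HasAntidiagonal.mem_antidiagonal.mp hp ▸ Nat.dvd_add h1 h2) h
      · rw [if_neg h2, mul_zero]
    · rw [if_neg h1, zero_mul]


lemma coeff_zero_factor (Λ : PreLambda R) (r : R) (k : ℕ) :
    coeff 0 (substPow (k + 1) (Λ.toFun r)) = 1 := by
  rw [coeff_substPow, if_pos (dvd_zero _), Nat.zero_div,
    PowerSeries.coeff_zero_eq_constantCoeff, Λ.constantCoeff_toFun]

lemma coeff_factor_eq_zero (k j : ℕ) (f : PowerSeries R) (h1 : 0 < j) (h2 : j ≤ k) :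
    coeff j (substPow (k + 1) f) = 0 := by
  rw [coeff_substPow, if_neg]
  intro hd
  have := Nat.le_of_dvd h1 hd
  omega

lemma coeff_factor_self (Λ : PreLambda R) (r : R) (k : ℕ) :
    coeff (k + 1) (substPow (k + 1) (Λ.toFun r)) = r := by
  rw [coeff_substPow, if_pos dvd_rfl, Nat.div_self (Nat.succ_pos k), Λ.coeff_one_toFun]

lemma coeff_mul_stable (P F : PowerSeries R) (n : ℕ) (h0 : coeff 0 F = 1)
    (h : ∀ j, 0 < j → j ≤ n → coeff j F = 0) :
    coeff n (P * F) = coeff n P := by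
  rw [PowerSeries.coeff_mul, Finset.sum_eq_single (n, 0)]
  · rw [h0, mul_one]
  · intro p hp hne
    have hm := Finset.HasAntidiagonal.mem_antidiagonal.mp hp
    have h2 : 0 < p.2 := by
      rcases Nat.eq_zero_or_pos p.2 with h' | h'
      · exact absurd (Prod.ext (by omega) h') hne
      · exact h'
    rw [h p.2 h2 (by omega), mul_zero]
  · intro habs
    exact absurd (Finset.HasAntidiagonal.mem_antidiagonal.mpr (by omega)) habs

lemma constantCoeff_prod (Λ : PreLambda R) (b : ℕ → R) (m : ℕ) :
    coeff 0 (∏ k ∈ Finset.range m, substPow (k + 1) (Λ.toFun (b k))) = 1 := by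
  rw [PowerSeries.coeff_zero_eq_constantCoeff, map_prod]
  refine Finset.prod_eq_one fun k _ => ?_
  rw [← PowerSeries.coeff_zero_eq_constantCoeff]
  exact coeff_zero_factor Λ (b k) k

lemma coeff_prod_stable (Λ : PreLambda R) (b : ℕ → R) (n m : ℕ) (h : n ≤ m) :
    coeff n (∏ k ∈ Finset.range m, substPow (k + 1) (Λ.toFun (b k))) =
    coeff n (∏ k ∈ Finset.range n, substPow (k + 1) (Λ.toFun (b k))) := by
  induction m with
  | zero => rw [Nat.le_zero.mp h]
  | succ m ih =>
    rcases Nat.eq_or_lt_of_le h with heq | hlt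
    · rw [heq]
    · have hn : n ≤ m := Nat.lt_succ_iff.mp hlt
      rw [Finset.prod_range_succ, coeff_mul_stable _ _ _ (coeff_zero_factor Λ (b m) m)
        (fun j hj hjn => coeff_factor_eq_zero m j _ hj (le_trans hjn hn)), ih hn]

lemma coeff_eulerProd (Λ : PreLambda R) (b : ℕ → R) (n m : ℕ) (h : n ≤ m) :
    coeff n (eulerProd Λ b) =
    coeff n (∏ k ∈ Finset.range m, substPow (k + 1) (Λ.toFun (b k))) := by
  rw [eulerProd, PowerSeries.coeff_mk, coeff_prod_stable Λ b n m h]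

lemma coeff_succ_prod (Λ : PreLambda R) (b : ℕ → R) (n : ℕ) :
    coeff (n + 1) (∏ k ∈ Finset.range (n + 1), substPow (k + 1) (Λ.toFun (b k))) =
    coeff (n + 1) (∏ k ∈ Finset.range n, substPow (k + 1) (Λ.toFun (b k))) + b n := by
  rw [Finset.prod_range_succ, PowerSeries.coeff_mul,
    Finset.Nat.sum_antidiagonal_eq_sum_range_succ_mk, Finset.sum_range_succ]
  have hmid : ∑ k ∈ Finset.range (n + 1),
      coeff k (∏ k ∈ Finset.range n, substPow (k + 1) (Λ.toFun (b k))) *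
        coeff (n + 1 - k) (substPow (n + 1) (Λ.toFun (b n))) = b n := by
    rw [Finset.sum_eq_single 0]
    · rw [Nat.sub_zero, constantCoeff_prod, coeff_factor_self, one_mul]
    · intro k hk hne
      have hkn := Finset.mem_range.mp hk
      rw [coeff_factor_eq_zero n (n + 1 - k) _ (by omega) (by omega), mul_zero]
    · intro habs
      exact absurd (Finset.mem_range.mpr (by omega)) habs
  rw [hmid, Nat.sub_self, PowerSeries.coeff_zero_eq_constantCoeff,
    ← PowerSeries.coeff_zero_eq_constantCoeff, coeff_zero_factor, mul_one, add_comm]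

lemma eulerProd_mul (Λ : PreLambda R) (b c : ℕ → R) :
    eulerProd Λ (b + c) = eulerProd Λ b * eulerProd Λ c := by
  ext n
  have hRHS : coeff n (eulerProd Λ b * eulerProd Λ c) =
      coeff n ((∏ k ∈ Finset.range n, substPow (k + 1) (Λ.toFun (b k))) *
        ∏ k ∈ Finset.range n, substPow (k + 1) (Λ.toFun (c k))) := by
    rw [PowerSeries.coeff_mul, PowerSeries.coeff_mul]
    refine Finset.sum_congr rfl fun p hp => ?_
    have hm := Finset.HasAntidiagonal.mem_antidiagonal.mp hp
    rw [coeff_eulerProd Λ b p.1 n (by omega), coeff_eulerProd Λ c p.2 n (by omega)]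
  rw [hRHS, coeff_eulerProd Λ (b + c) n n le_rfl]
  congr 1
  rw [← Finset.prod_mul_distrib]
  refine Finset.prod_congr rfl fun k _ => ?_
  rw [Pi.add_apply, Λ.toFun_add, substPow_mul (k + 1) (Nat.succ_pos k)]

noncomputable def invB (Λ : PreLambda R) (A : PowerSeries R) : ℕ → R
  | n => PowerSeries.coeff (n + 1) A - PowerSeries.coeff (n + 1)
      (∏ k ∈ (Finset.range n).attach, substPow (k.1 + 1) (Λ.toFun (invB Λ A k.1)))
  decreasing_by exact Finset.mem_range.mp k.2

lemma invB_eq (Λ : PreLambda R) (A : PowerSeries R) (n : ℕ) :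
    invB Λ A n = PowerSeries.coeff (n + 1) A - PowerSeries.coeff (n + 1)
      (∏ k ∈ Finset.range n, substPow (k + 1) (Λ.toFun (invB Λ A k))) := by
  rw [invB]
  congr 1
  exact congrArg (coeff (n + 1)) <| Finset.prod_attach (Finset.range n) fun k => substPow (k + 1) (Λ.toFun (invB Λ A k))

/-- **Exp is a group isomorphism.** The map `Exp : t·R[[t]] → 1+t·R[[t]]`,
`Exp(Σ_{k≥1} b_k t^k) := ∏_{k≥1} λ(b_k)(t^k)` (a series with zero constant term being
encoded by its sequence of coefficients `b : ℕ → R`, `b k = b_{k+1}`), is a group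
isomorphism from the additive group of power series with zero constant term onto the
multiplicative group of power series with constant coefficient `1`. -/
theorem eulerProd_group_isomorphism (Λ : PreLambda R) :
    (∀ b c : ℕ → R, eulerProd Λ (b + c) = eulerProd Λ b * eulerProd Λ c) ∧
    (∀ b : ℕ → R, PowerSeries.constantCoeff (eulerProd Λ b) = 1) ∧
    (∀ A : PowerSeries R, PowerSeries.constantCoeff A = 1 →
      ∃! b : ℕ → R, eulerProd Λ b = A) := by
  refine ⟨eulerProd_mul Λ, ?_, ?_⟩
  · intro b
    rw [← PowerSeries.coeff_zero_eq_constantCoeff, eulerProd, PowerSeries.coeff_mk,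
      Finset.range_zero, Finset.prod_empty, PowerSeries.coeff_zero_eq_constantCoeff, map_one]
  · intro A hA
    refine ⟨invB Λ A, ?_, ?_⟩
    · ext n
      cases n with
      | zero =>
        rw [PowerSeries.coeff_zero_eq_constantCoeff, hA, ← PowerSeries.coeff_zero_eq_constantCoeff,
          eulerProd, PowerSeries.coeff_mk, Finset.range_zero, Finset.prod_empty,
          PowerSeries.coeff_zero_eq_constantCoeff, map_one]
      | succ n =>
        rw [coeff_eulerProd Λ (invB Λ A) (n + 1) (n + 1) le_rfl, coeff_succ_prod,
          invB_eq Λ A n, add_sub_cancel]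
    · intro c hc
      funext n
      induction n using Nat.strong_induction_on with
      | _ n ih =>
        have hprod : (∏ k ∈ Finset.range n, substPow (k + 1) (Λ.toFun (c k))) =
            ∏ k ∈ Finset.range n, substPow (k + 1) (Λ.toFun (invB Λ A k)) :=
          Finset.prod_congr rfl fun k hk => by rw [ih k (Finset.mem_range.mp hk)]
        have h1 : coeff (n + 1) (eulerProd Λ c) = coeff (n + 1) A := by rw [hc]
        rw [coeff_eulerProd Λ c (n + 1) (n + 1) le_rfl, coeff_succ_prod] at h1
        rw [invB_eq Λ A n, ← hprod]
        linear_combination h1
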